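/- Let X_t = e^{B_t − t/2} be exponential Brownian motion with X_0 = 1. Then for any x ≥ 0 and T > 0, E[(X_T − x)^+] = (1 − x)^+ + (x²/2) ∫₀^T p_t(x) dt, where p_t is the density of X_t. -/

import Mathlib

open Real MeasureTheory ProbabilityTheory

open Set Filter Topology
open scoped NNReal ENNReal

/-- The lognormal density of exponential Brownian motion at time `t`. -/
noncomputable def ebmDensity (t x : ℝ) : ℝ :=
  (1 / Real.sqrt (2 * Real.pi)) * (Real.exp (-t / 8) / Real.sqrt t) *
    (Real.exp (-(Real.log x) ^ 2 / (2 * t)) / x ^ ((3 : ℝ) / 2))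


noncomputable def stdPdf (z : ℝ) : ℝ := gaussianPDFReal 0 1 z

lemma stdPdf_eq (z : ℝ) : stdPdf z = (Real.sqrt (2 * π))⁻¹ * Real.exp (- z ^ 2 / 2) := by
  simp [stdPdf, gaussianPDFReal]

lemma continuous_stdPdf : Continuous stdPdf := by
  unfold stdPdf gaussianPDFReal; fun_prop

lemma integrable_stdPdf : Integrable stdPdf := integrable_gaussianPDFReal 0 1

lemma stdPdf_nonneg (z : ℝ) : 0 ≤ stdPdf z := gaussianPDFReal_nonneg 0 1 z

lemma integral_stdPdf : ∫ z, stdPdf z = 1 := integral_gaussianPDFReal_eq_one 0 one_ne_zero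

lemma stdPdf_neg (z : ℝ) : stdPdf (-z) = stdPdf z := by simp [stdPdf_eq]

noncomputable def Psi (y : ℝ) : ℝ := ∫ z in Set.Ioi y, stdPdf z
noncomputable def Phi (y : ℝ) : ℝ := ∫ z in Set.Iic y, stdPdf z

lemma Phi_add_Psi (y : ℝ) : Phi y + Psi y = 1 := by
  rw [Phi, Psi, ← setIntegral_union (Iic_disjoint_Ioi le_rfl) measurableSet_Ioi
    integrable_stdPdf.integrableOn integrable_stdPdf.integrableOn, Iic_union_Ioi,
    Measure.restrict_univ, integral_stdPdf]

lemma Phi_eq_Psi_neg (y : ℝ) : Phi y = Psi (-y) := by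
  rw [Phi, Psi, ← integral_comp_neg_Iic]
  exact setIntegral_congr_fun measurableSet_Iic (fun z _ => (stdPdf_neg z).symm)

lemma hasDerivAt_Phi (y : ℝ) : HasDerivAt Phi (stdPdf y) y := by
  have h : Phi = fun y => Phi 0 + ∫ z in (0:ℝ)..y, stdPdf z := by
    funext u
    have h2 := intervalIntegral.integral_Iic_sub_Iic
      (integrable_stdPdf.integrableOn (s := Iic 0)) (integrable_stdPdf.integrableOn (s := Iic u))
    simp only [Phi]
    linarith
  rw [h]
  exact (intervalIntegral.integral_hasDerivAt_right
    (integrable_stdPdf.intervalIntegrable)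
    (continuous_stdPdf.stronglyMeasurable.stronglyMeasurableAtFilter)
    continuous_stdPdf.continuousAt).const_add _

lemma Psi_eq (y : ℝ) : Psi y = 1 - Phi y := by linarith [Phi_add_Psi y]

lemma hasDerivAt_Psi (y : ℝ) : HasDerivAt Psi (-stdPdf y) y := by
  have : Psi = fun y => 1 - Phi y := funext Psi_eq
  rw [this]
  simpa using (hasDerivAt_Phi y).const_sub 1

lemma Psi_tendsto_atTop : Tendsto Psi atTop (𝓝 0) := by
  have hub : ∀ y : ℝ, 2 ≤ y → Psi y ≤ (Real.sqrt (2 * π))⁻¹ * Real.exp (-y) := by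
    intro y hy
    have hint : IntegrableOn (fun z => (Real.sqrt (2 * π))⁻¹ * Real.exp (-z)) (Ioi y) := by
      have := (exp_neg_integrableOn_Ioi y (one_pos)).const_mul (Real.sqrt (2 * π))⁻¹
      simpa [IntegrableOn] using this
    have hle : Psi y ≤ ∫ z in Ioi y, (Real.sqrt (2 * π))⁻¹ * Real.exp (-z) := by
      refine setIntegral_mono_on integrable_stdPdf.integrableOn hint measurableSet_Ioi ?_
      intro z hz
      rw [stdPdf_eq]
      have hz2 : (2:ℝ) ≤ z := hy.trans (le_of_lt hz)
      have : -z ^ 2 / 2 ≤ -z := by nlinarith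
      exact mul_le_mul_of_nonneg_left (Real.exp_le_exp.2 this) (by positivity)
    calc Psi y ≤ _ := hle
      _ = (Real.sqrt (2 * π))⁻¹ * Real.exp (-y) := by
          rw [integral_const_mul, integral_exp_neg_Ioi]
  have hlb : ∀ y : ℝ, 0 ≤ Psi y := fun y =>
    setIntegral_nonneg measurableSet_Ioi (fun z _ => stdPdf_nonneg z)
  have hub' : Tendsto (fun y : ℝ => (Real.sqrt (2 * π))⁻¹ * Real.exp (-y)) atTop (𝓝 0) := by
    simpa using (Real.tendsto_exp_atBot.comp tendsto_neg_atTop_atBot).const_mul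
      (Real.sqrt (2 * π))⁻¹
  refine tendsto_of_tendsto_of_tendsto_of_le_of_le'
    (tendsto_const_nhds) hub' (Eventually.of_forall hlb) ?_
  filter_upwards [eventually_ge_atTop (2:ℝ)] with y hy using hub y hy

lemma Psi_tendsto_atBot : Tendsto Psi atBot (𝓝 1) := by
  have : ∀ y, Psi y = 1 - Psi (-y) := by
    intro y; rw [Psi_eq, Phi_eq_Psi_neg]
  have h := Psi_tendsto_atTop.comp tendsto_neg_atBot_atTop
  have h2 : Tendsto (fun y => 1 - Psi (-y)) atBot (𝓝 1) := by
    simpa using (tendsto_const_nhds.sub h :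
      Tendsto (fun y : ℝ => 1 - Psi (-y)) atBot (𝓝 (1 - 0)))
  exact h2.congr (fun y => (this y).symm)

lemma integral_Ioi_comp_sub (f : ℝ → ℝ) (a μ : ℝ) :
    ∫ z in Ioi a, f (z - μ) = ∫ z in Ioi (a - μ), f z := by
  rw [← integral_indicator measurableSet_Ioi, ← integral_indicator measurableSet_Ioi]
  rw [← integral_sub_right_eq_self (fun x => indicator (Ioi (a - μ)) f x) μ]
  congr 1
  funext z
  simp only [indicator, mem_Ioi]
  by_cases h : a < z
  · rw [if_pos h, if_pos (by linarith)]
  · rw [if_neg h, if_neg (by intro hc; exact h (by linarith))]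

lemma gaussianPDFReal_eq_stdPdf (μ : ℝ) {v : ℝ≥0} (hv : 0 < (v : ℝ)) (z : ℝ) :
    gaussianPDFReal μ v z = (Real.sqrt v)⁻¹ * stdPdf ((z - μ) / Real.sqrt v) := by
  rw [gaussianPDFReal, stdPdf_eq, div_pow, Real.sq_sqrt hv.le,
    show (2:ℝ) * π * v = (2 * π) * v by ring, Real.sqrt_mul (by positivity), mul_inv]
  have h : -((z - μ) ^ 2 / (v:ℝ)) / 2 = -(z - μ) ^ 2 / (2 * v) := by ring
  rw [h]; ring

lemma integral_Ioi_gaussianPDFReal (μ a : ℝ) {v : ℝ≥0} (hv : 0 < (v : ℝ)) :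
    ∫ z in Ioi a, gaussianPDFReal μ v z = Psi ((a - μ) / Real.sqrt v) := by
  have hs : 0 < Real.sqrt v := Real.sqrt_pos.2 hv
  simp_rw [gaussianPDFReal_eq_stdPdf μ hv]
  rw [integral_const_mul]
  have h1 : ∫ z in Ioi a, stdPdf ((z - μ) / Real.sqrt v)
      = ∫ z in Ioi (a - μ), stdPdf (z / Real.sqrt v) :=
    integral_Ioi_comp_sub (fun u => stdPdf (u / Real.sqrt v)) a μ
  rw [h1]
  have h2 : ∫ z in Ioi (a - μ), stdPdf (z / Real.sqrt v)
      = ∫ z in Ioi (a - μ), stdPdf ((Real.sqrt v)⁻¹ * z) := by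
    congr 1; funext z; rw [div_eq_inv_mul]
  rw [h2, integral_comp_mul_left_Ioi stdPdf _ (inv_pos.2 hs)]
  rw [inv_inv, smul_eq_mul, ← mul_assoc, inv_mul_cancel₀ hs.ne', one_mul, inv_mul_eq_div]
  rfl

lemma exp_mul_gaussianPDFReal {t : ℝ} (ht : 0 < t) (z : ℝ) :
    Real.exp z * gaussianPDFReal (-(t/2)) t.toNNReal z = gaussianPDFReal (t/2) t.toNNReal z := by
  have hco : ((t.toNNReal : ℝ)) = t := Real.coe_toNNReal t ht.le
  simp only [gaussianPDFReal, hco]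
  rw [mul_left_comm, ← Real.exp_add]
  congr 1
  field_simp
  ring

lemma expectation_eq {x : ℝ} (hx : 0 < x) {t : ℝ} (ht : 0 < t) :
    (∫ z : ℝ, max (Real.exp z - x) 0 ∂(gaussianReal (-(t / 2)) t.toNNReal)) =
      Psi ((Real.log x - t/2)/Real.sqrt t) - x * Psi ((Real.log x + t/2)/Real.sqrt t) := by
  have hvne : t.toNNReal ≠ 0 := (Real.toNNReal_pos.2 ht).ne'
  have hco : ((t.toNNReal : ℝ)) = t := Real.coe_toNNReal t ht.le
  have hvpos : 0 < ((t.toNNReal : ℝ)) := by rw [hco]; exact ht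
  set a := Real.log x with ha
  rw [gaussianReal_of_var_ne_zero _ hvne]
  have hwd : (ℙ : Measure ℝ).withDensity (gaussianPDF (-(t / 2)) t.toNNReal)
      = (ℙ : Measure ℝ).withDensity
        (fun z => ((gaussianPDFReal (-(t/2)) t.toNNReal z).toNNReal : ℝ≥0∞)) := rfl
  rw [hwd, integral_withDensity_eq_integral_smul ((measurable_gaussianPDFReal _ _).real_toNNReal)]
  have htr : ∀ z, (gaussianPDFReal (-(t/2)) t.toNNReal z).toNNReal • max (Real.exp z - x) 0
      = indicator (Ici a) (fun z => gaussianPDFReal (t/2) t.toNNReal z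
        - x * gaussianPDFReal (-(t/2)) t.toNNReal z) z := by
    intro z
    rw [NNReal.smul_def, Real.coe_toNNReal _ (gaussianPDFReal_nonneg _ _ _), smul_eq_mul]
    by_cases h : a ≤ z
    · rw [indicator_of_mem (mem_Ici.2 h)]
      have hxz : x ≤ Real.exp z := by
        have := Real.exp_le_exp.2 h
        rwa [ha, Real.exp_log hx] at this
      rw [max_eq_left (by linarith), ← exp_mul_gaussianPDFReal ht]
      ring
    · rw [indicator_of_notMem (by simpa using h)]
      have hxz : Real.exp z < x := by
        have := Real.exp_lt_exp.2 (lt_of_not_ge h)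
        rwa [ha, Real.exp_log hx] at this
      rw [max_eq_right (by linarith), mul_zero]
  simp_rw [htr]
  rw [integral_indicator measurableSet_Ici, integral_Ici_eq_integral_Ioi,
    integral_sub (integrable_gaussianPDFReal _ _).integrableOn
      (((integrable_gaussianPDFReal _ _).const_mul x).integrableOn),
    integral_const_mul, integral_Ioi_gaussianPDFReal _ _ hvpos,
    integral_Ioi_gaussianPDFReal _ _ hvpos, hco]
  norm_num [sub_neg_eq_add]

lemma tendsto_atTop_add_nhds {α : Type*} {f g : α → ℝ} {l : Filter α} {C : ℝ}
    (hf : Tendsto f l atTop) (hg : Tendsto g l (𝓝 C)) :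
    Tendsto (fun x => f x + g x) l atTop := by
  refine tendsto_atTop_mono' l ?_ (tendsto_atTop_add_const_right l (C - 1) hf)
  filter_upwards [hg.eventually (eventually_gt_nhds (by linarith : C - 1 < C))] with y hy
  show _ ≤ _
  linarith

lemma tendsto_atBot_add_nhds {α : Type*} {f g : α → ℝ} {l : Filter α} {C : ℝ}
    (hf : Tendsto f l atBot) (hg : Tendsto g l (𝓝 C)) :
    Tendsto (fun x => f x + g x) l atBot := by
  refine tendsto_atBot_mono' l ?_ (tendsto_atBot_add_const_right l (C + 1) hf)
  filter_upwards [hg.eventually (eventually_lt_nhds (by linarith : C < C + 1))] with y hy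
  show _ ≤ _
  linarith

lemma hasDerivAt_G {x a : ℝ} (hx : 0 < x) (hxa : Real.exp a = x) {t : ℝ} (ht : 0 < t) :
    HasDerivAt (fun u => Psi ((a - u/2)/Real.sqrt u) - x * Psi ((a + u/2)/Real.sqrt u))
      (x/2 * (Real.sqrt t)⁻¹ * stdPdf ((a + t/2)/Real.sqrt t)) t := by
  have hs : 0 < Real.sqrt t := Real.sqrt_pos.2 ht
  have hsq : Real.sqrt t ^ 2 = t := Real.sq_sqrt ht.le
  have hsqrt := Real.hasDerivAt_sqrt ht.ne'
  have hd : HasDerivAt (fun u => (a - u/2)/Real.sqrt u)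
      ((-(1/2) * Real.sqrt t - (a - t/2) * (1/(2*Real.sqrt t)))/ Real.sqrt t ^ 2) t :=
    (((hasDerivAt_id t).div_const 2).const_sub a).div hsqrt hs.ne'
  have he : HasDerivAt (fun u => (a + u/2)/Real.sqrt u)
      (((1/2) * Real.sqrt t - (a + t/2) * (1/(2*Real.sqrt t)))/ Real.sqrt t ^ 2) t :=
    (((hasDerivAt_id t).div_const 2).const_add a).div hsqrt hs.ne'
  have hPd : HasDerivAt (fun u => Psi ((a - u/2)/Real.sqrt u))
      (-stdPdf ((a - t/2)/Real.sqrt t) *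
        ((-(1/2) * Real.sqrt t - (a - t/2) * (1/(2*Real.sqrt t)))/ Real.sqrt t ^ 2)) t :=
    (hasDerivAt_Psi _).comp t hd
  have hPe : HasDerivAt (fun u => Psi ((a + u/2)/Real.sqrt u))
      (-stdPdf ((a + t/2)/Real.sqrt t) *
        (((1/2) * Real.sqrt t - (a + t/2) * (1/(2*Real.sqrt t)))/ Real.sqrt t ^ 2)) t :=
    (hasDerivAt_Psi _).comp t he
  have hG := hPd.sub (hPe.const_mul x)
  refine hG.congr_deriv ?_
  have key : stdPdf ((a - t/2)/Real.sqrt t) = x * stdPdf ((a + t/2)/Real.sqrt t) := by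
    rw [stdPdf_eq, stdPdf_eq, ← hxa, mul_left_comm, ← Real.exp_add]
    congr 1
    rw [div_pow, div_pow, hsq]
    field_simp
    ring
  rw [key]
  set P := stdPdf ((a + t/2)/Real.sqrt t)
  set s := Real.sqrt t with hsdef
  rw [show t = s^2 from hsq.symm]
  field_simp
  ring

lemma tendsto_G {x a : ℝ} (hx : 0 < x) (hxa : Real.exp a = x) :
    Tendsto (fun t => Psi ((a - t/2)/Real.sqrt t) - x * Psi ((a + t/2)/Real.sqrt t))
      (𝓝[>](0:ℝ)) (𝓝 (max (1 - x) 0)) := by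
  have hsqrt0 : Tendsto (fun t : ℝ => Real.sqrt t) (𝓝[>](0:ℝ)) (𝓝[>](0:ℝ)) := by
    rw [tendsto_nhdsWithin_iff]
    constructor
    · simpa using (Real.continuous_sqrt.tendsto 0).mono_left
        (nhdsWithin_le_nhds (s := Ioi (0:ℝ)))
    · filter_upwards [self_mem_nhdsWithin] with t ht
      exact Real.sqrt_pos.2 ht
  have hinv : Tendsto (fun t : ℝ => (Real.sqrt t)⁻¹) (𝓝[>](0:ℝ)) atTop :=
    tendsto_inv_nhdsGT_zero.comp hsqrt0
  have hhalf : Tendsto (fun t : ℝ => Real.sqrt t / 2) (𝓝[>](0:ℝ)) (𝓝 0) := by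
    have h0 : Tendsto (fun t : ℝ => Real.sqrt t) (𝓝[>](0:ℝ)) (𝓝 0) :=
      hsqrt0.mono_right nhdsWithin_le_nhds
    simpa using h0.div_const 2
  have hrw1 : ∀ᶠ t in (𝓝[>](0:ℝ)),
      (a + t/2)/Real.sqrt t = a * (Real.sqrt t)⁻¹ + Real.sqrt t/2 := by
    filter_upwards [self_mem_nhdsWithin] with t ht
    have hs := Real.sqrt_pos.2 (mem_Ioi.1 ht)
    field_simp
    nlinarith [Real.sq_sqrt (le_of_lt (mem_Ioi.1 ht))]
  have hrw2 : ∀ᶠ t in (𝓝[>](0:ℝ)),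
      (a - t/2)/Real.sqrt t = a * (Real.sqrt t)⁻¹ - Real.sqrt t/2 := by
    filter_upwards [self_mem_nhdsWithin] with t ht
    have hs := Real.sqrt_pos.2 (mem_Ioi.1 ht)
    field_simp
    nlinarith [Real.sq_sqrt (le_of_lt (mem_Ioi.1 ht))]
  rcases lt_trichotomy a 0 with ha | ha | ha
  · have hx1 : x < 1 := by rw [← hxa]; calc Real.exp a < Real.exp 0 := Real.exp_lt_exp.2 ha
      _ = 1 := Real.exp_zero
    have hA : Tendsto (fun t => (a - t/2)/Real.sqrt t) (𝓝[>](0:ℝ)) atBot := by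
      refine Tendsto.congr' (hrw2.mono fun t h => h.symm) ?_
      exact tendsto_atBot_add_nhds (hinv.const_mul_atTop_of_neg ha) (by simpa using hhalf.neg)
        |>.congr (fun t => by ring)
    have hB : Tendsto (fun t => (a + t/2)/Real.sqrt t) (𝓝[>](0:ℝ)) atBot := by
      refine Tendsto.congr' (hrw1.mono fun t h => h.symm) ?_
      exact tendsto_atBot_add_nhds (hinv.const_mul_atTop_of_neg ha) hhalf
    have := (Psi_tendsto_atBot.comp hA).sub ((Psi_tendsto_atBot.comp hB).const_mul x)
    rw [max_eq_left (by linarith)]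
    simpa using this
  · have hx1 : x = 1 := by rw [← hxa, ha, Real.exp_zero]
    subst hx1
    have hA : Tendsto (fun t => (a - t/2)/Real.sqrt t) (𝓝[>](0:ℝ)) (𝓝 0) := by
      refine Tendsto.congr' (hrw2.mono fun t h => h.symm) ?_
      have : Tendsto (fun t : ℝ => a * (Real.sqrt t)⁻¹ - Real.sqrt t/2) (𝓝[>](0:ℝ)) (𝓝 0) := by
        rw [ha]
        simpa using hhalf.neg.congr (fun t => by ring)
      exact this
    have hB : Tendsto (fun t => (a + t/2)/Real.sqrt t) (𝓝[>](0:ℝ)) (𝓝 0) := by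
      refine Tendsto.congr' (hrw1.mono fun t h => h.symm) ?_
      rw [ha]
      simpa using hhalf.congr (fun t => by ring)
    have hPc : Tendsto Psi (𝓝 (0:ℝ)) (𝓝 (Psi 0)) := (hasDerivAt_Psi 0).continuousAt.tendsto
    have := (hPc.comp hA).sub ((hPc.comp hB).const_mul 1)
    simpa using this
  · have hx1 : 1 < x := by rw [← hxa]; calc (1:ℝ) = Real.exp 0 := Real.exp_zero.symm
      _ < Real.exp a := Real.exp_lt_exp.2 ha
    have hA : Tendsto (fun t => (a - t/2)/Real.sqrt t) (𝓝[>](0:ℝ)) atTop := by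
      refine Tendsto.congr' (hrw2.mono fun t h => h.symm) ?_
      exact tendsto_atTop_add_nhds (hinv.const_mul_atTop ha) (by simpa using hhalf.neg)
        |>.congr (fun t => by ring)
    have hB : Tendsto (fun t => (a + t/2)/Real.sqrt t) (𝓝[>](0:ℝ)) atTop := by
      refine Tendsto.congr' (hrw1.mono fun t h => h.symm) ?_
      exact tendsto_atTop_add_nhds (hinv.const_mul_atTop ha) hhalf
    have := (Psi_tendsto_atTop.comp hA).sub ((Psi_tendsto_atTop.comp hB).const_mul x)
    rw [max_eq_right (by linarith)]
    simpa using this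

lemma ebm_identity {x : ℝ} (hx : 0 < x) {t : ℝ} (ht : 0 < t) :
    x ^ 2 / 2 * ebmDensity t x
      = x/2 * (Real.sqrt t)⁻¹ * stdPdf ((Real.log x + t/2)/Real.sqrt t) := by
  have hs : 0 < Real.sqrt t := Real.sqrt_pos.2 ht
  have hsq : Real.sqrt t ^ 2 = t := Real.sq_sqrt ht.le
  set a := Real.log x with ha
  have hxa : x = Real.exp a := (Real.exp_log hx).symm
  rw [ebmDensity, stdPdf_eq, div_pow, hsq, Real.rpow_def_of_pos hx, ← ha, hxa]
  have e1 : Real.exp a ^ 2 * (Real.exp (-t/8) * Real.exp (-a^2/(2*t)))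
      = Real.exp (a * (3/2)) * (Real.exp a * Real.exp (-((a + t/2)^2/t)/2)) := by
    simp only [sq, ← Real.exp_add]
    congr 1
    field_simp
    ring
  set A := Real.exp a with hA
  set B := Real.exp (-t/8) with hB
  set C := Real.exp (-a^2/(2*t)) with hC
  set D := Real.exp (a*(3/2)) with hD
  set E := Real.exp (-((a + t/2)^2/t)/2) with hE
  set Q := Real.sqrt (2*π) with hQ
  set S := Real.sqrt t with hS
  have hD0 : D ≠ 0 := by rw [hD]; exact Real.exp_ne_zero _
  have hQ0 : Q ≠ 0 := by rw [hQ]; positivity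
  have hS0 : S ≠ 0 := hs.ne'
  clear_value a A B C D E Q S
  field_simp
  linear_combination e1

/-- The Carr–Jarrow/Klebaner identity for exponential Brownian motion
`X_T = e^{B_T - T/2}`, whose law is that of `e^Z` with `Z ~ N(-T/2, T)`:
`E[(X_T − x)⁺] = (1 − x)⁺ + (x²/2) ∫₀^T p_t(x) dt`. -/
theorem carrJarrow_ebm {x T : ℝ} (hx : 0 ≤ x) (hT : 0 < T) :
    (∫ z : ℝ, max (Real.exp z - x) 0 ∂(gaussianReal (-(T / 2)) T.toNNReal)) =
      max (1 - x) 0 + x ^ 2 / 2 * ∫ t in Set.Ioc (0 : ℝ) T, ebmDensity t x := by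
  rcases eq_or_lt_of_le hx with hx0 | hx0
  · -- x = 0
    subst hx0
    have h1 : ∀ z : ℝ, max (Real.exp z - 0) 0 = Real.exp z := fun z => by
      simp [max_eq_left (Real.exp_pos z).le]
    simp_rw [h1]
    norm_num
    have hvne : T.toNNReal ≠ 0 := (Real.toNNReal_pos.2 hT).ne'
    rw [gaussianReal_of_var_ne_zero _ hvne]
    have hwd : (ℙ : Measure ℝ).withDensity (gaussianPDF (-(T / 2)) T.toNNReal)
        = (ℙ : Measure ℝ).withDensity
          (fun z => ((gaussianPDFReal (-(T/2)) T.toNNReal z).toNNReal : ℝ≥0∞)) := rfl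
    rw [hwd, integral_withDensity_eq_integral_smul
      ((measurable_gaussianPDFReal _ _).real_toNNReal)]
    have h2 : ∀ z, (gaussianPDFReal (-(T/2)) T.toNNReal z).toNNReal • Real.exp z
        = gaussianPDFReal (T/2) T.toNNReal z := fun z => by
      rw [NNReal.smul_def, Real.coe_toNNReal _ (gaussianPDFReal_nonneg _ _ _), smul_eq_mul,
        mul_comm]
      exact exp_mul_gaussianPDFReal hT z
    simp_rw [h2]
    exact integral_gaussianPDFReal_eq_one _ hvne
  · -- x > 0
    set a := Real.log x with ha
    have hxa : Real.exp a = x := Real.exp_log hx0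
    set G : ℝ → ℝ := fun u => Psi ((a - u/2)/Real.sqrt u) - x * Psi ((a + u/2)/Real.sqrt u)
      with hG
    set g : ℝ → ℝ := fun u => x/2 * (Real.sqrt u)⁻¹ * stdPdf ((a + u/2)/Real.sqrt u) with hg
    -- continuity of g on Ioi 0
    have hgc : ContinuousOn g (Ioi (0:ℝ)) := by
      rw [hg]
      refine ContinuousOn.mul (ContinuousOn.mul continuousOn_const ?_) ?_
      · exact (Real.continuous_sqrt.continuousOn).inv₀
          (fun u hu => (Real.sqrt_pos.2 (mem_Ioi.1 hu)).ne')
      · refine continuous_stdPdf.comp_continuousOn ?_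
        exact ContinuousOn.div (by fun_prop) Real.continuous_sqrt.continuousOn
          (fun u hu => (Real.sqrt_pos.2 (mem_Ioi.1 hu)).ne')
    -- bound and integrability
    have hgnn : ∀ u ∈ Ioi (0:ℝ), 0 ≤ g u := by
      intro u hu
      rw [hg]
      have := gaussianPDFReal_nonneg 0 1 ((a + u/2)/Real.sqrt u)
      have hs := Real.sqrt_nonneg u
      positivity
    have hgb : ∀ u ∈ Ioi (0:ℝ),
        g u ≤ (x/2 * (Real.sqrt (2*π))⁻¹) * u ^ (-(1/2) : ℝ) := by
      intro u hu
      have hu0 : (0:ℝ) < u := hu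
      have hs : 0 < Real.sqrt u := Real.sqrt_pos.2 hu0
      have hrw : u ^ (-(1/2) : ℝ) = (Real.sqrt u)⁻¹ := by
        rw [Real.rpow_neg hu0.le, ← Real.sqrt_eq_rpow]
      rw [hg, hrw]
      have hpdf : stdPdf ((a + u/2)/Real.sqrt u) ≤ (Real.sqrt (2*π))⁻¹ := by
        rw [stdPdf_eq]
        have h1 : Real.exp (-((a + u/2)/Real.sqrt u) ^ 2 / 2) ≤ 1 := by
          rw [Real.exp_le_one_iff]
          nlinarith [sq_nonneg ((a + u/2)/Real.sqrt u)]
        nlinarith [Real.sqrt_nonneg (2*π), inv_nonneg.2 (Real.sqrt_nonneg (2*π)),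
          Real.exp_pos (-((a + u/2)/Real.sqrt u) ^ 2 / 2)]
      calc x/2 * (Real.sqrt u)⁻¹ * stdPdf ((a + u/2)/Real.sqrt u)
          ≤ x/2 * (Real.sqrt u)⁻¹ * (Real.sqrt (2*π))⁻¹ := by
            apply mul_le_mul_of_nonneg_left hpdf
            positivity
        _ = (x/2 * (Real.sqrt (2*π))⁻¹) * (Real.sqrt u)⁻¹ := by ring
    have hrpow_int : IntegrableOn (fun u : ℝ => (x/2 * (Real.sqrt (2*π))⁻¹) * u ^ (-(1/2) : ℝ))
        (Ioc 0 T) := by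
      have h1 : IntervalIntegrable (fun u : ℝ => u ^ (-(1/2):ℝ)) volume 0 T :=
        intervalIntegral.intervalIntegrable_rpow' (by norm_num)
      have h2 : IntegrableOn (fun u : ℝ => u ^ (-(1/2):ℝ)) (Ioc 0 T) :=
        (intervalIntegrable_iff_integrableOn_Ioc_of_le hT.le).1 h1
      exact h2.const_mul _
    have hg_int : IntegrableOn g (Ioc 0 T) := by
      refine Integrable.mono' hrpow_int
        ((hgc.mono Ioc_subset_Ioi_self).aestronglyMeasurable measurableSet_Ioc) ?_
      filter_upwards [ae_restrict_mem measurableSet_Ioc] with u hu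
      rw [Real.norm_eq_abs, abs_of_nonneg (hgnn u (Ioc_subset_Ioi_self hu))]
      exact hgb u (Ioc_subset_Ioi_self hu)
    -- FTC on [ε, T]
    have hFTC : ∀ ε ∈ Ioo (0:ℝ) T, G ε = G T - ∫ s in Ioc ε T, g s := by
      intro ε hε
      have hεT : ε ≤ T := hε.2.le
      have h1 : ∫ s in ε..T, g s = G T - G ε := by
        apply intervalIntegral.integral_eq_sub_of_hasDerivAt
        · intro u hu
          rw [uIcc_of_le hεT] at hu
          exact hasDerivAt_G hx0 hxa (lt_of_lt_of_le hε.1 hu.1)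
        · apply ContinuousOn.intervalIntegrable
          apply hgc.mono
          rw [uIcc_of_le hεT]
          intro u hu
          exact lt_of_lt_of_le hε.1 hu.1
      rw [intervalIntegral.integral_of_le hεT] at h1
      linarith
    -- limit of the integral
    have hIoc_eq : 𝓝[Ioo (0:ℝ) T] (0:ℝ) = 𝓝[>](0:ℝ) := by
      have h1 : Ioo (0:ℝ) T = Ioi 0 ∩ Iio T := (Ioi_inter_Iio).symm
      rw [h1]
      exact nhdsWithin_inter_of_mem' (mem_nhdsWithin_of_mem_nhds (Iio_mem_nhds hT))
    have hIooMem : Ioo (0:ℝ) T ∈ 𝓝[>](0:ℝ) := hIoc_eq ▸ self_mem_nhdsWithin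
    have hItend : Tendsto (fun ε => ∫ s in Ioc ε T, g s) (𝓝[>](0:ℝ))
        (𝓝 (∫ s in Ioc 0 T, g s)) := by
      have hprim : ContinuousOn (fun u => ∫ s in Ioc 0 u, g s) (Icc 0 T) :=
        intervalIntegral.continuousOn_primitive ((integrableOn_Icc_iff_integrableOn_Ioc (by finiteness)).2 hg_int)
      have hF0 : Tendsto (fun u => ∫ s in Ioc 0 u, g s) (𝓝[>](0:ℝ)) (𝓝 0) := by
        have h0 : (0:ℝ) ∈ Icc (0:ℝ) T := ⟨le_rfl, hT.le⟩
        have hcw := hprim 0 h0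
        have hv : ∫ s in Ioc (0:ℝ) 0, g s = 0 := by simp
        have h2 : Tendsto (fun u => ∫ s in Ioc 0 u, g s) (𝓝[Icc 0 T] 0) (𝓝 0) := by
          simpa [ContinuousWithinAt, hv] using hcw
        have h3 := h2.mono_left (nhdsWithin_mono 0 Ioo_subset_Icc_self)
        rwa [hIoc_eq] at h3
      have hsplit : ∀ᶠ ε in 𝓝[>](0:ℝ), ∫ s in Ioc ε T, g s
          = (∫ s in Ioc 0 T, g s) - ∫ s in Ioc 0 ε, g s := by
        filter_upwards [hIooMem] with ε hε
        have hu := setIntegral_union (Ioc_disjoint_Ioc_of_le le_rfl) measurableSet_Ioc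
          (hg_int.mono_set (Ioc_subset_Ioc_right hε.2.le))
          (hg_int.mono_set (Ioc_subset_Ioc_left hε.1.le))
        rw [Ioc_union_Ioc_eq_Ioc hε.1.le hε.2.le] at hu
        linarith
      refine Tendsto.congr' (hsplit.mono fun ε h => h.symm) ?_
      simpa using tendsto_const_nhds.sub hF0
    have hmain : max (1 - x) 0 = G T - ∫ s in Ioc 0 T, g s := by
      have h1 : Tendsto G (𝓝[>](0:ℝ)) (𝓝 (max (1 - x) 0)) := tendsto_G hx0 hxa
      have h2 : Tendsto G (𝓝[>](0:ℝ)) (𝓝 (G T - ∫ s in Ioc 0 T, g s)) := by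
        refine Tendsto.congr' ?_ (tendsto_const_nhds.sub hItend)
        filter_upwards [hIooMem] with ε hε
        exact (hFTC ε hε).symm
      exact tendsto_nhds_unique h1 h2
    have hfinal : ∫ s in Ioc (0:ℝ) T, g s = x ^ 2 / 2 * ∫ t in Ioc (0:ℝ) T, ebmDensity t x := by
      rw [← integral_const_mul]
      apply setIntegral_congr_fun measurableSet_Ioc
      intro s hs
      show g s = x ^ 2 / 2 * ebmDensity s x
      rw [ebm_identity hx0 hs.1]
    have hE := expectation_eq hx0 hT
    have hGT : (∫ z : ℝ, max (Real.exp z - x) 0 ∂(gaussianReal (-(T / 2)) T.toNNReal))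
        = G T := hE
    rw [hGT, ← hfinal]
    linarith [hmain]
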